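/- For every θ ≥ 1, there exists a probability measure ν on ℝ × ℝ concentrated on [0,1] × [0,1] whose two marginals are each the uniform distribution on [0,1], such that for all u, v ∈ (0,1]: ν([0,u] × [0,v]) = exp(−((−ln u)^θ + (−ln v)^θ)^{1/θ}). That is, the Gumbel function C_Gu(u,v) = exp(−((−ln u)^θ + (−ln v)^θ)^{1/θ}) is a copula. -/

import Mathlib

open MeasureTheory Set Filter

namespace GumbelAux

noncomputable def sF (θ t v : ℝ) : ℝ := (-Real.log t) ^ θ + (-Real.log v) ^ θ

/-- conditional density-ish: `∂₁ C(t,v)` -/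
noncomputable def Ffun (θ v t : ℝ) : ℝ :=
  Real.exp (-(sF θ t v ^ (1/θ))) * sF θ t v ^ (1/θ - 1) * (-Real.log t) ^ (θ - 1) / t

noncomputable def Cfun (θ v t : ℝ) : ℝ :=
  if t ≤ 0 then 0 else Real.exp (-(sF θ t v ^ (1/θ)))

noncomputable def Gfun (θ t p : ℝ) : ℝ :=
  if (0 < t ∧ t < 1) ∧ 0 < p ∧ p < 1 then
    sInf {v | v ∈ Ioc (0:ℝ) 1 ∧ p ≤ Ffun θ v t} else 1

variable {θ : ℝ}

lemma thpos (hθ : 1 ≤ θ) : 0 < θ := lt_of_lt_of_le one_pos hθ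

lemma xpos {t : ℝ} (ht : 0 < t) (ht1 : t < 1) : 0 < -Real.log t :=
  neg_pos.2 (Real.log_neg ht ht1)

lemma ynn {v : ℝ} (hv : 0 < v) (hv1 : v ≤ 1) : 0 ≤ -Real.log v :=
  neg_nonneg.2 (Real.log_nonpos hv.le hv1)

lemma sF_pos (hθ : 1 ≤ θ) {t v : ℝ} (ht : 0 < t) (ht1 : t < 1) (hv : 0 < v) (hv1 : v ≤ 1) :
    0 < sF θ t v := by
  have hx := xpos ht ht1
  have hy := ynn hv hv1
  have h1 : 0 < (-Real.log t) ^ θ := Real.rpow_pos_of_pos hx θ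
  have h2 : 0 ≤ (-Real.log v) ^ θ := Real.rpow_nonneg hy θ
  unfold sF; linarith

lemma Ffun_pos (hθ : 1 ≤ θ) {t v : ℝ} (ht : 0 < t) (ht1 : t < 1) (hv : 0 < v) (hv1 : v ≤ 1) :
    0 < Ffun θ v t := by
  have hx := xpos ht ht1
  have hs := sF_pos hθ ht ht1 hv hv1
  unfold Ffun
  have := Real.exp_pos (-(sF θ t v ^ (1/θ)))
  have := Real.rpow_pos_of_pos hs (1/θ - 1)
  have := Real.rpow_pos_of_pos hx (θ - 1)
  positivity

lemma Ffun_one (hθ : 1 ≤ θ) {t : ℝ} (ht : 0 < t) (ht1 : t < 1) : Ffun θ 1 t = 1 := by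
  have hθ0 := thpos hθ
  have hx := xpos ht ht1
  unfold Ffun sF
  rw [Real.log_one, neg_zero, Real.zero_rpow hθ0.ne', add_zero,
    ← Real.rpow_mul hx.le, ← Real.rpow_mul hx.le,
    mul_one_div_cancel hθ0.ne', Real.rpow_one]
  have h1 : θ * (1/θ - 1) = 1 - θ := by field_simp
  rw [h1, mul_assoc, ← Real.rpow_add hx]
  have h2 : (1 : ℝ) - θ + (θ - 1) = 0 := by ring
  rw [h2, Real.rpow_zero, mul_one, neg_neg, Real.exp_log ht, div_self ht.ne']

/-- `r ↦ exp(-r) r^(1-θ)` is antitone on positives. -/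
lemma hfun_anti (hθ : 1 ≤ θ) {r₁ r₂ : ℝ} (hr₁ : 0 < r₁) (h12 : r₁ ≤ r₂) :
    Real.exp (-r₂) * r₂ ^ (1-θ) ≤ Real.exp (-r₁) * r₁ ^ (1-θ) := by
  have key : AntitoneOn (fun r : ℝ => Real.exp (-r) * r ^ (1-θ)) (Ioi 0) := by
    have hderiv : ∀ r ∈ Ioi (0:ℝ), HasDerivAt (fun r : ℝ => Real.exp (-r) * r ^ (1-θ))
        ((-Real.exp (-r)) * r ^ (1-θ) + Real.exp (-r) * ((1-θ) * r ^ (1-θ-1))) r := by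
      intro r hr
      have h1 : HasDerivAt (fun r : ℝ => Real.exp (-r)) (-Real.exp (-r)) r := by
        have := (Real.hasDerivAt_exp (-r)).comp r (hasDerivAt_neg r)
        simp only [mul_neg, mul_one] at this
        exact this
      have h2 : HasDerivAt (fun r : ℝ => r ^ (1-θ)) ((1-θ) * r ^ (1-θ-1)) r :=
        Real.hasDerivAt_rpow_const (Or.inl (ne_of_gt hr))
      exact h1.mul h2
    apply antitoneOn_of_deriv_nonpos (convex_Ioi 0)
    · exact ContinuousOn.mul
        (Real.continuous_exp.comp continuous_neg).continuousOn
        (fun r hr => (Real.continuousAt_rpow_const r (1-θ) (Or.inl (ne_of_gt hr))).continuousWithinAt)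
    · intro r hr
      rw [interior_Ioi] at hr
      exact (hderiv r hr).differentiableAt.differentiableWithinAt
    · intro r hr
      rw [interior_Ioi] at hr
      rw [(hderiv r hr).deriv]
      have he := Real.exp_pos (-r)
      have hp1 : 0 < r ^ (1-θ) := Real.rpow_pos_of_pos hr _
      have hp2 : 0 < r ^ (1-θ-1) := Real.rpow_pos_of_pos hr _
      have hth : 1 - θ ≤ 0 := by linarith
      nlinarith [mul_pos he hp1, mul_pos he hp2, mul_nonneg (mul_nonneg he.le hp2.le) (neg_nonneg.2 hth)]
  exact key (mem_Ioi.2 hr₁) (mem_Ioi.2 (lt_of_lt_of_le hr₁ h12)) h12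

lemma Ffun_as_h (hθ : 1 ≤ θ) {t v : ℝ} (hs : 0 < sF θ t v) :
    Ffun θ v t =
      Real.exp (-(sF θ t v ^ (1/θ))) * (sF θ t v ^ (1/θ)) ^ (1-θ) * (-Real.log t) ^ (θ - 1) / t := by
  have hθ0 := thpos hθ
  unfold Ffun
  rw [← Real.rpow_mul hs.le]
  congr 3
  field_simp

lemma Ffun_mono (hθ : 1 ≤ θ) {t : ℝ} (ht : 0 < t) (ht1 : t < 1) {v₁ v₂ : ℝ}
    (hv₁ : 0 < v₁) (h12 : v₁ ≤ v₂) (hv₂ : v₂ ≤ 1) : Ffun θ v₁ t ≤ Ffun θ v₂ t := by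
  have hθ0 := thpos hθ
  have hx := xpos ht ht1
  have hs₁ : 0 < sF θ t v₁ := sF_pos hθ ht ht1 hv₁ (h12.trans hv₂)
  have hs₂ : 0 < sF θ t v₂ := sF_pos hθ ht ht1 (hv₁.trans_le h12) hv₂
  have hss : sF θ t v₂ ≤ sF θ t v₁ := by
    unfold sF
    have hy2 : 0 ≤ -Real.log v₂ := ynn (hv₁.trans_le h12) hv₂
    have hy12 : -Real.log v₂ ≤ -Real.log v₁ :=
      neg_le_neg (Real.log_le_log hv₁ h12)
    exact add_le_add (le_refl _) (Real.rpow_le_rpow hy2 hy12 hθ0.le)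
  have hr₂ : 0 < sF θ t v₂ ^ (1/θ) := Real.rpow_pos_of_pos hs₂ _
  have hrr : sF θ t v₂ ^ (1/θ) ≤ sF θ t v₁ ^ (1/θ) :=
    Real.rpow_le_rpow hs₂.le hss (by positivity)
  have hh := hfun_anti hθ hr₂ hrr
  rw [Ffun_as_h hθ hs₁, Ffun_as_h hθ hs₂]
  have hxnn : 0 ≤ (-Real.log t) ^ (θ - 1) := (Real.rpow_pos_of_pos hx _).le
  gcongr

lemma Ffun_le_one (hθ : 1 ≤ θ) {t v : ℝ} (ht : 0 < t) (ht1 : t < 1) (hv : 0 < v) (hv1 : v ≤ 1) :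
    Ffun θ v t ≤ 1 := by
  have := Ffun_mono hθ ht ht1 hv hv1 le_rfl
  rwa [Ffun_one hθ ht ht1] at this

lemma Ffun_tendsto_zero (hθ : 1 ≤ θ) {t : ℝ} (ht : 0 < t) (ht1 : t < 1) :
    Tendsto (fun v => Ffun θ v t) (nhdsWithin 0 (Ioi 0)) (nhds 0) := by
  have hθ0 := thpos hθ
  have hx := xpos ht ht1
  have hy : Tendsto (fun v : ℝ => -Real.log v) (nhdsWithin 0 (Ioi 0)) atTop :=
    tendsto_neg_atBot_atTop.comp Real.tendsto_log_nhdsGT_zero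
  have hs : Tendsto (fun v : ℝ => sF θ t v) (nhdsWithin 0 (Ioi 0)) atTop := by
    unfold sF
    exact tendsto_atTop_add_const_left _ _ ((tendsto_rpow_atTop hθ0).comp hy)
  have hr : Tendsto (fun v : ℝ => sF θ t v ^ (1/θ)) (nhdsWithin 0 (Ioi 0)) atTop :=
    (tendsto_rpow_atTop (by positivity)).comp hs
  have hh : Tendsto (fun r : ℝ => r ^ (1-θ) * Real.exp (-1 * r)) atTop (nhds 0) :=
    tendsto_rpow_mul_exp_neg_mul_atTop_nhds_zero (1-θ) 1 one_pos
  have hmain := (hh.comp hr).mul_const ((-Real.log t) ^ (θ - 1) / t)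
  rw [zero_mul] at hmain
  apply hmain.congr'
  filter_upwards [Ioo_mem_nhdsGT_of_mem (by norm_num : (0:ℝ) ∈ Ico (0:ℝ) 1)] with v hv
  have hs' : 0 < sF θ t v := sF_pos hθ ht ht1 hv.1 hv.2.le
  rw [Ffun_as_h hθ hs']
  simp only [Function.comp_apply, neg_one_mul]
  ring

lemma Ffun_contAt (hθ : 1 ≤ θ) {t v : ℝ} (ht : 0 < t) (ht1 : t < 1) (hv : 0 < v) (hv1 : v < 1) :
    ContinuousAt (fun w => Ffun θ w t) v := by
  have hθ0 := thpos hθ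
  have hx := xpos ht ht1
  have hy := xpos hv hv1
  have hs : 0 < sF θ t v := sF_pos hθ ht ht1 hv hv1.le
  have hcs : ContinuousAt (fun w => sF θ t w) v := by
    unfold sF
    apply ContinuousAt.add continuousAt_const
    exact ((Real.continuousAt_log hv.ne').neg).rpow_const (Or.inl hy.ne')
  unfold Ffun
  apply ContinuousAt.div _ continuousAt_const ht.ne'
  apply ContinuousAt.mul _ continuousAt_const
  apply ContinuousAt.mul
  · exact ((hcs.rpow_const (Or.inl hs.ne')).neg).rexp
  · exact hcs.rpow_const (Or.inl hs.ne')

lemma measurable_Ffun (θ v : ℝ) : Measurable (fun t => Ffun θ v t) := by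
  unfold Ffun sF; measurability


lemma Cfun_hasDeriv (hθ : 1 ≤ θ) {v : ℝ} (hv : 0 < v) (hv1 : v ≤ 1) {t : ℝ}
    (ht : 0 < t) (ht1 : t < 1) : HasDerivAt (Cfun θ v) (Ffun θ v t) t := by
  have hθ0 := thpos hθ
  have hx := xpos ht ht1
  have hs : 0 < sF θ t v := sF_pos hθ ht ht1 hv hv1
  have h1 : HasDerivAt (fun t : ℝ => -Real.log t) (-t⁻¹) t := (Real.hasDerivAt_log ht.ne').neg
  have h2 : HasDerivAt (fun t : ℝ => (-Real.log t) ^ θ)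
      (-t⁻¹ * θ * (-Real.log t) ^ (θ - 1)) t := h1.rpow_const (Or.inl hx.ne')
  have h3 : HasDerivAt (fun t : ℝ => sF θ t v)
      (-t⁻¹ * θ * (-Real.log t) ^ (θ - 1)) t := by
    unfold sF; exact h2.add_const _
  have h4 : HasDerivAt (fun t : ℝ => sF θ t v ^ (1/θ))
      ((-t⁻¹ * θ * (-Real.log t) ^ (θ - 1)) * (1/θ) * sF θ t v ^ (1/θ - 1)) t :=
    h3.rpow_const (Or.inl hs.ne')
  have h5 := (h4.neg).exp
  have heq : Real.exp (-(sF θ t v ^ (1/θ))) *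
      (-(-t⁻¹ * θ * (-Real.log t) ^ (θ - 1) * (1/θ) * sF θ t v ^ (1/θ - 1))) = Ffun θ v t := by
    unfold Ffun
    field_simp
  simp only [Pi.neg_apply] at h5
  rw [heq] at h5
  apply h5.congr_of_eventuallyEq
  filter_upwards [Ioi_mem_nhds ht] with w hw
  unfold Cfun
  rw [if_neg (not_le.2 hw)]

lemma Cfun_nonneg (θ v t : ℝ) : 0 ≤ Cfun θ v t := by
  unfold Cfun; split
  · exact le_refl 0
  · exact (Real.exp_pos _).le

lemma Cfun_le (hθ : 1 ≤ θ) {v : ℝ} (hv : 0 < v) (hv1 : v ≤ 1) {t : ℝ}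
    (ht0 : 0 ≤ t) (ht1 : t ≤ 1) : Cfun θ v t ≤ t := by
  have hθ0 := thpos hθ
  unfold Cfun
  split
  · assumption
  · rename_i ht
    push_neg at ht
    have hxnn : 0 ≤ -Real.log t := ynn ht ht1
    have hynn : 0 ≤ (-Real.log v) ^ θ := Real.rpow_nonneg (ynn hv hv1) θ
    have hle : -Real.log t ≤ sF θ t v ^ (1/θ) := by
      have h1 : ((-Real.log t) ^ θ) ^ (1/θ) ≤ sF θ t v ^ (1/θ) := by
        apply Real.rpow_le_rpow (Real.rpow_nonneg hxnn θ) _ (by positivity)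
        unfold sF; linarith
      rwa [← Real.rpow_mul hxnn, mul_one_div_cancel hθ0.ne', Real.rpow_one] at h1
    calc Real.exp (-(sF θ t v ^ (1/θ))) ≤ Real.exp (-(-Real.log t)) :=
          Real.exp_le_exp.2 (by linarith)
      _ = t := by rw [neg_neg, Real.exp_log ht]

lemma Cfun_contOn (hθ : 1 ≤ θ) {v : ℝ} (hv : 0 < v) (hv1 : v ≤ 1) :
    ContinuousOn (Cfun θ v) (Icc 0 1) := by
  have hθ0 := thpos hθ
  intro t ht
  rcases eq_or_lt_of_le ht.1 with h0 | h0
  · -- t = 0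
    subst h0
    have h00 : Cfun θ v 0 = 0 := by unfold Cfun; rw [if_pos le_rfl]
    unfold ContinuousWithinAt
    rw [h00]
    apply squeeze_zero' (Eventually.of_forall fun w => Cfun_nonneg θ v w)
    · filter_upwards [self_mem_nhdsWithin] with w hw
      exact Cfun_le hθ hv hv1 hw.1 hw.2
    · exact tendsto_id.mono_left nhdsWithin_le_nhds
  · -- 0 < t
    apply ContinuousAt.continuousWithinAt
    have hxnn : 0 ≤ -Real.log t := ynn h0 ht.2
    have hsnn : 0 ≤ sF θ t v := by
      unfold sF
      have := Real.rpow_nonneg hxnn θ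
      have := Real.rpow_nonneg (ynn hv hv1) θ
      linarith
    have hcont : ContinuousAt (fun t : ℝ => Real.exp (-(sF θ t v ^ (1/θ)))) t := by
      apply ContinuousAt.rexp
      apply ContinuousAt.neg
      apply ContinuousAt.rpow_const _ (Or.inr (by positivity))
      unfold sF
      apply ContinuousAt.add _ continuousAt_const
      exact ((Real.continuousAt_log h0.ne').neg).rpow_const (Or.inr hθ0.le)
    apply hcont.congr
    filter_upwards [Ioi_mem_nhds h0] with w hw
    unfold Cfun
    rw [if_neg (not_le.2 hw)]

lemma Ffun_integrableOn (hθ : 1 ≤ θ) {v : ℝ} (hv : 0 < v) (hv1 : v ≤ 1) {u : ℝ}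
    (hu : 0 < u) (hu1 : u ≤ 1) : IntegrableOn (fun t => Ffun θ v t) (Ioo 0 u) volume := by
  apply Integrable.mono' (g := fun _ => (1:ℝ))
  · exact integrableOn_const measure_Ioo_lt_top.ne
  · exact (measurable_Ffun θ v).aestronglyMeasurable
  · rw [ae_restrict_iff' measurableSet_Ioo]
    apply Eventually.of_forall
    intro t htm
    have ht1 : t < 1 := lt_of_lt_of_le htm.2 hu1
    rw [Real.norm_eq_abs, abs_of_pos (Ffun_pos hθ htm.1 ht1 hv hv1)]
    exact Ffun_le_one hθ htm.1 ht1 hv hv1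

lemma Ffun_integral (hθ : 1 ≤ θ) {v : ℝ} (hv : 0 < v) (hv1 : v ≤ 1) {u : ℝ}
    (hu : 0 < u) (hu1 : u ≤ 1) :
    ∫ t in Ioo (0:ℝ) u, Ffun θ v t = Cfun θ v u := by
  have hFTC := intervalIntegral.integral_eq_sub_of_hasDeriv_right_of_le hu.le
    ((Cfun_contOn hθ hv hv1).mono (Icc_subset_Icc le_rfl hu1))
    (fun t htm => (Cfun_hasDeriv hθ hv hv1 htm.1 (lt_of_lt_of_le htm.2 hu1)).hasDerivWithinAt)
    (by
      rw [intervalIntegrable_iff_integrableOn_Ioc_of_le hu.le]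
      rw [IntegrableOn, Measure.restrict_congr_set Ioo_ae_eq_Ioc.symm]
      exact Ffun_integrableOn hθ hv hv1 hu hu1)
  have h0 : Cfun θ v 0 = 0 := by unfold Cfun; rw [if_pos le_rfl]
  rw [intervalIntegral.integral_of_le hu.le, integral_Ioc_eq_integral_Ioo] at hFTC
  rw [hFTC, h0, sub_zero]


lemma Gset_bddBelow (θ t p : ℝ) : BddBelow {v | v ∈ Ioc (0:ℝ) 1 ∧ p ≤ Ffun θ v t} :=
  ⟨0, fun w hw => hw.1.1.le⟩

lemma Gset_one_mem (hθ : 1 ≤ θ) {t p : ℝ} (ht : 0 < t) (ht1 : t < 1) (hp1 : p ≤ 1) :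
    (1:ℝ) ∈ {v | v ∈ Ioc (0:ℝ) 1 ∧ p ≤ Ffun θ v t} := by
  refine ⟨⟨one_pos, le_rfl⟩, ?_⟩
  rw [Ffun_one hθ ht ht1]
  exact hp1

lemma Gfun_le_one (hθ : 1 ≤ θ) (t p : ℝ) : Gfun θ t p ≤ 1 := by
  unfold Gfun
  split
  · rename_i h
    exact csInf_le (Gset_bddBelow θ t p) (Gset_one_mem hθ h.1.1 h.1.2 h.2.2.le)
  · exact le_rfl

lemma Gfun_pos (hθ : 1 ≤ θ) {t p : ℝ} (ht : 0 < t) (ht1 : t < 1) (hp : 0 < p) (hp1 : p < 1) :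
    0 < Gfun θ t p := by
  have hev : ∀ᶠ w in nhdsWithin 0 (Ioi 0), Ffun θ w t < p :=
    (Ffun_tendsto_zero hθ ht ht1).eventually_lt_const hp
  rw [eventually_iff, mem_nhdsGT_iff_exists_Ioo_subset] at hev
  obtain ⟨ε, hε, hsub⟩ := hev
  have hlb : ∀ w ∈ {v | v ∈ Ioc (0:ℝ) 1 ∧ p ≤ Ffun θ v t}, ε ≤ w := by
    intro w hw
    by_contra hlt
    push_neg at hlt
    exact absurd hw.2 (not_le.2 (hsub ⟨hw.1.1, hlt⟩))
  unfold Gfun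
  rw [if_pos ⟨⟨ht, ht1⟩, hp, hp1⟩]
  exact lt_of_lt_of_le hε (le_csInf ⟨1, Gset_one_mem hθ ht ht1 hp1.le⟩ hlb)

lemma Gfun_le_iff (hθ : 1 ≤ θ) {t p : ℝ} (ht : 0 < t) (ht1 : t < 1) (hp : 0 < p) (hp1 : p < 1)
    {v : ℝ} (hv : 0 < v) (hv1 : v ≤ 1) :
    Gfun θ t p ≤ v ↔ p ≤ Ffun θ v t := by
  have hsq : (0 < t ∧ t < 1) ∧ 0 < p ∧ p < 1 := ⟨⟨ht, ht1⟩, hp, hp1⟩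
  constructor
  · intro hle
    rcases eq_or_lt_of_le hv1 with h1 | h1
    · subst h1
      rw [Ffun_one hθ ht ht1]
      exact hp1.le
    · by_contra hcon
      push_neg at hcon
      have hev : ∀ᶠ w in nhds v, Ffun θ w t < p :=
        (Ffun_contAt hθ ht ht1 hv h1).eventually_lt_const hcon
      rw [Metric.eventually_nhds_iff] at hev
      obtain ⟨δ, hδ, hball⟩ := hev
      set v' := min (v + δ/2) ((v+1)/2) with hv'def
      have hvv' : v < v' := lt_min (by linarith) (by linarith)
      have hv'1 : v' ≤ 1 := le_trans (min_le_right _ _) (by linarith)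
      have hfv' : Ffun θ v' t < p := by
        apply hball
        rw [Real.dist_eq, abs_of_pos (by linarith : (0:ℝ) < v' - v)]
        have : v' ≤ v + δ/2 := min_le_left _ _
        linarith
      have hlb : v' ≤ Gfun θ t p := by
        unfold Gfun
        rw [if_pos hsq]
        apply le_csInf ⟨1, Gset_one_mem hθ ht ht1 hp1.le⟩
        intro w hw
        by_contra hlt
        push_neg at hlt
        have : Ffun θ w t ≤ Ffun θ v' t := Ffun_mono hθ ht ht1 hw.1.1 hlt.le hv'1
        exact absurd hw.2 (not_le.2 (lt_of_le_of_lt this hfv'))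
      linarith
  · intro hle
    unfold Gfun
    rw [if_pos hsq]
    exact csInf_le (Gset_bddBelow θ t p) ⟨⟨hv, hv1⟩, hle⟩

lemma measurable_Gfun (hθ : 1 ≤ θ) : Measurable (fun q : ℝ × ℝ => Gfun θ q.1 q.2) := by
  apply measurable_of_Iic
  intro a
  by_cases ha1 : 1 ≤ a
  · have : (fun q : ℝ × ℝ => Gfun θ q.1 q.2) ⁻¹' Iic a = univ :=
      eq_univ_of_forall fun q => le_trans (Gfun_le_one hθ q.1 q.2) ha1
    rw [this]; exact MeasurableSet.univ
  · push_neg at ha1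
    by_cases ha0 : a ≤ 0
    · have : (fun q : ℝ × ℝ => Gfun θ q.1 q.2) ⁻¹' Iic a = ∅ := by
        apply eq_empty_of_forall_notMem
        intro q hq
        simp only [mem_preimage, mem_Iic] at hq
        by_cases hsq : (0 < q.1 ∧ q.1 < 1) ∧ 0 < q.2 ∧ q.2 < 1
        · have := Gfun_pos hθ hsq.1.1 hsq.1.2 hsq.2.1 hsq.2.2
          linarith
        · have : Gfun θ q.1 q.2 = 1 := by unfold Gfun; rw [if_neg hsq]
          rw [this] at hq; linarith
      rw [this]; exact MeasurableSet.empty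
    · push_neg at ha0
      have : (fun q : ℝ × ℝ => Gfun θ q.1 q.2) ⁻¹' Iic a =
          (Ioo 0 1 ×ˢ Ioo 0 1) ∩ {q : ℝ × ℝ | q.2 ≤ Ffun θ a q.1} := by
        ext q
        simp only [mem_preimage, mem_Iic, mem_inter_iff, mem_prod, mem_Ioo, mem_setOf_eq]
        constructor
        · intro hq
          by_cases hsq : (0 < q.1 ∧ q.1 < 1) ∧ 0 < q.2 ∧ q.2 < 1
          · exact ⟨⟨hsq.1, hsq.2⟩,
              (Gfun_le_iff hθ hsq.1.1 hsq.1.2 hsq.2.1 hsq.2.2 ha0 ha1.le).1 hq⟩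
          · have : Gfun θ q.1 q.2 = 1 := by unfold Gfun; rw [if_neg hsq]
            rw [this] at hq; linarith
        · intro ⟨⟨h1, h2⟩, h3⟩
          exact (Gfun_le_iff hθ h1.1 h1.2 h2.1 h2.2 ha0 ha1.le).2 h3
      rw [this]
      exact (measurableSet_Ioo.prod measurableSet_Ioo).inter
        (measurableSet_le measurable_snd ((measurable_Ffun θ a).comp measurable_fst))


lemma slice {c : ℝ} (hc : 0 < c) (hc1 : c ≤ 1) :
    volume (Ioo (0:ℝ) 1 ∩ {p : ℝ | p ≤ c}) = ENNReal.ofReal c := by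
  apply le_antisymm
  · have hsub : Ioo (0:ℝ) 1 ∩ {p | p ≤ c} ⊆ Ioc 0 c := fun p hp => ⟨hp.1.1, hp.2⟩
    calc volume (Ioo (0:ℝ) 1 ∩ {p | p ≤ c}) ≤ volume (Ioc (0:ℝ) c) := measure_mono hsub
      _ = ENNReal.ofReal c := by rw [Real.volume_Ioc, sub_zero]
  · have hsub : Ioo (0:ℝ) c ⊆ Ioo 0 1 ∩ {p | p ≤ c} :=
      fun p hp => ⟨⟨hp.1, lt_of_lt_of_le hp.2 hc1⟩, hp.2.le⟩
    calc ENNReal.ofReal c = volume (Ioo (0:ℝ) c) := by rw [Real.volume_Ioo, sub_zero]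
      _ ≤ volume (Ioo (0:ℝ) 1 ∩ {p | p ≤ c}) := measure_mono hsub

lemma Cfun_at_one (hθ : 1 ≤ θ) {a : ℝ} (ha : 0 < a) (ha1 : a ≤ 1) : Cfun θ a 1 = a := by
  unfold Cfun sF
  rw [if_neg (by norm_num), Real.log_one, neg_zero, Real.zero_rpow (thpos hθ).ne', zero_add,
    ← Real.rpow_mul (ynn ha ha1), mul_one_div_cancel (thpos hθ).ne', Real.rpow_one,
    neg_neg, Real.exp_log ha]

lemma measurableSet_A (hθ : 1 ≤ θ) (u v : ℝ) :
    MeasurableSet {q : ℝ × ℝ | q.1 ≤ u ∧ Gfun θ q.1 q.2 ≤ v} :=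
  MeasurableSet.inter (measurable_fst measurableSet_Iic)
    ((measurable_Gfun hθ) measurableSet_Iic)

lemma key (hθ : 1 ≤ θ) {u : ℝ} (hu : 0 < u) (hu1 : u ≤ 1) {v : ℝ} (hv : 0 < v) (hv1 : v ≤ 1) :
    (volume : Measure (ℝ × ℝ)).restrict (Ioo 0 1 ×ˢ Ioo 0 1)
      {q : ℝ × ℝ | q.1 ≤ u ∧ Gfun θ q.1 q.2 ≤ v} = ENNReal.ofReal (Cfun θ v u) := by
  rw [Measure.restrict_apply (measurableSet_A hθ u v)]
  set B : Set (ℝ × ℝ) := {q : ℝ × ℝ | q.1 ∈ Ioo (0:ℝ) 1 ∩ Iic u ∧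
      q.2 ∈ Ioo (0:ℝ) 1 ∩ {p : ℝ | p ≤ Ffun θ v q.1}} with hBdef
  have hsets : {q : ℝ × ℝ | q.1 ≤ u ∧ Gfun θ q.1 q.2 ≤ v} ∩ (Ioo 0 1 ×ˢ Ioo 0 1) = B := by
    ext q
    constructor
    · rintro ⟨⟨h1, h2⟩, h3, h4⟩
      have h3' : 0 < q.1 ∧ q.1 < 1 := h3
      have h4' : 0 < q.2 ∧ q.2 < 1 := h4
      exact ⟨⟨h3, h1⟩, h4, (Gfun_le_iff hθ h3'.1 h3'.2 h4'.1 h4'.2 hv hv1).1 h2⟩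
    · rintro ⟨⟨h3, h1⟩, h4, h2⟩
      have h3' : 0 < q.1 ∧ q.1 < 1 := h3
      have h4' : 0 < q.2 ∧ q.2 < 1 := h4
      exact ⟨⟨h1, (Gfun_le_iff hθ h3'.1 h3'.2 h4'.1 h4'.2 hv hv1).2 h2⟩, h3, h4⟩
  have hmB : MeasurableSet B := by
    have hBeq : B = ((Ioo (0:ℝ) 1 ∩ Iic u) ×ˢ Ioo (0:ℝ) 1) ∩
        {q : ℝ × ℝ | q.2 ≤ Ffun θ v q.1} := by
      ext q
      constructor
      · rintro ⟨⟨h3, h1⟩, h4, h2⟩; exact ⟨⟨⟨h3, h1⟩, h4⟩, h2⟩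
      · rintro ⟨⟨⟨h3, h1⟩, h4⟩, h2⟩; exact ⟨⟨h3, h1⟩, h4, h2⟩
    rw [hBeq]
    exact ((measurableSet_Ioo.inter measurableSet_Iic).prod measurableSet_Ioo).inter
      (measurableSet_le measurable_snd ((measurable_Ffun θ v).comp measurable_fst))
  rw [hsets, Measure.volume_eq_prod, Measure.prod_apply hmB]
  have hsec : ∀ t : ℝ, volume (Prod.mk t ⁻¹' B) =
      (Ioo (0:ℝ) 1 ∩ Iic u).indicator (fun t => ENNReal.ofReal (Ffun θ v t)) t := by
    intro t
    by_cases htm : t ∈ Ioo (0:ℝ) 1 ∩ Iic u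
    · rw [indicator_of_mem htm]
      have hpre : Prod.mk t ⁻¹' B = Ioo (0:ℝ) 1 ∩ {p : ℝ | p ≤ Ffun θ v t} := by
        ext p
        constructor
        · rintro ⟨_, hp⟩; exact hp
        · intro hp; exact ⟨htm, hp⟩
      rw [hpre]
      exact slice (Ffun_pos hθ htm.1.1 htm.1.2 hv hv1) (Ffun_le_one hθ htm.1.1 htm.1.2 hv hv1)
    · rw [indicator_of_notMem htm]
      have hpre : Prod.mk t ⁻¹' B = ∅ := by
        apply eq_empty_of_forall_notMem
        rintro p ⟨h1, _⟩
        exact htm h1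
      rw [hpre, measure_empty]
  rw [lintegral_congr hsec, lintegral_indicator (measurableSet_Ioo.inter measurableSet_Iic)]
  have hae : (Ioo (0:ℝ) 1 ∩ Iic u : Set ℝ) =ᵐ[volume] Ioo (0:ℝ) u := by
    rw [ae_eq_set]
    constructor
    · refine measure_mono_null (fun t ht => ?_) (Real.volume_singleton (a := u))
      obtain ⟨⟨⟨ht0, ht1⟩, htu⟩, hnot⟩ := ht
      have : ¬ t < u := fun h => hnot ⟨ht0, h⟩
      exact le_antisymm htu (not_lt.1 this)
    · have : Ioo (0:ℝ) u \ (Ioo 0 1 ∩ Iic u) = ∅ := by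
        apply eq_empty_of_forall_notMem
        rintro t ⟨⟨ht0, htu⟩, hnot⟩
        exact hnot ⟨⟨ht0, lt_of_lt_of_le htu hu1⟩, htu.le⟩
      rw [this, measure_empty]
  rw [setLIntegral_congr hae,
    ← ofReal_integral_eq_lintegral_ofReal (Ffun_integrableOn hθ hv hv1 hu hu1)
      ((ae_restrict_iff' measurableSet_Ioo).2 (Eventually.of_forall fun t htm =>
        (Ffun_pos hθ htm.1 (lt_of_lt_of_le htm.2 hu1) hv hv1).le)),
    Ffun_integral hθ hv hv1 hu hu1]

end GumbelAux

open GumbelAux in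
/-- The Gumbel function `C_Gu(u,v) = exp(−((−ln u)^θ + (−ln v)^θ)^{1/θ})`, `θ ≥ 1`,
is a copula. -/
theorem gumbel_is_copula (θ : ℝ) (hθ : 1 ≤ θ) :
    ∃ ν : Measure (ℝ × ℝ),
      IsProbabilityMeasure ν ∧
      ν ((Set.Icc (0 : ℝ) 1 ×ˢ Set.Icc (0 : ℝ) 1)ᶜ) = 0 ∧
      ν.map Prod.fst = volume.restrict (Set.Icc (0 : ℝ) 1) ∧
      ν.map Prod.snd = volume.restrict (Set.Icc (0 : ℝ) 1) ∧
      ∀ u ∈ Set.Ioc (0 : ℝ) 1, ∀ v ∈ Set.Ioc (0 : ℝ) 1,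
        (ν (Set.Icc 0 u ×ˢ Set.Icc 0 v)).toReal =
          Real.exp (-(((-Real.log u) ^ θ + (-Real.log v) ^ θ) ^ (1 / θ))) := by
  classical
  set sq : Set (ℝ × ℝ) := Ioo (0:ℝ) 1 ×ˢ Ioo (0:ℝ) 1 with hsqdef
  set T : ℝ × ℝ → ℝ × ℝ := fun q => (q.1, Gfun θ q.1 q.2) with hTdef
  have hT : Measurable T := measurable_fst.prodMk (measurable_Gfun hθ)
  set μ0 : Measure (ℝ × ℝ) := volume.restrict sq with hμ0
  have hsqvol : volume sq = 1 := by
    rw [hsqdef, Measure.volume_eq_prod, Measure.prod_prod, Real.volume_Ioo]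
    simp
  have hμ0univ : μ0 univ = 1 := by rw [hμ0, Measure.restrict_apply_univ, hsqvol]
  have hPM : IsProbabilityMeasure (μ0.map T) := by
    constructor
    rw [Measure.map_apply hT MeasurableSet.univ, preimage_univ, hμ0univ]
  refine ⟨μ0.map T, hPM, ?_, ?_, ?_, ?_⟩
  · -- concentrated on the unit square
    rw [Measure.map_apply hT ((measurableSet_Icc.prod measurableSet_Icc).compl), hμ0,
      Measure.restrict_apply (hT ((measurableSet_Icc.prod measurableSet_Icc).compl))]
    have hempty : T ⁻¹' (Icc (0:ℝ) 1 ×ˢ Icc (0:ℝ) 1)ᶜ ∩ sq = ∅ := by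
      apply eq_empty_of_forall_notMem
      rintro q ⟨hmem, hq⟩
      have hq1 : 0 < q.1 ∧ q.1 < 1 := hq.1
      have hq2 : 0 < q.2 ∧ q.2 < 1 := hq.2
      exact hmem ⟨⟨hq1.1.le, hq1.2.le⟩,
        (Gfun_pos hθ hq1.1 hq1.2 hq2.1 hq2.2).le, Gfun_le_one hθ q.1 q.2⟩
    rw [hempty, measure_empty]
  · -- first marginal
    rw [Measure.map_map measurable_fst hT]
    have hcomp : Prod.fst ∘ T = Prod.fst := rfl
    rw [hcomp, hμ0, hsqdef, Measure.volume_eq_prod, ← Measure.prod_restrict,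
      Measure.map_fst_prod, Measure.restrict_apply_univ, Real.volume_Ioo]
    rw [show ((1:ℝ) - 0) = 1 by ring, ENNReal.ofReal_one, one_smul]
    exact Measure.restrict_congr_set Ioo_ae_eq_Icc
  · -- second marginal
    haveI : IsProbabilityMeasure ((μ0.map T).map Prod.snd) :=
      Measure.isProbabilityMeasure_map measurable_snd.aemeasurable
    apply Measure.ext_of_Iic
    intro a
    rw [Measure.map_map measurable_snd hT]
    have hcomp : (Prod.snd ∘ T) = fun q : ℝ × ℝ => Gfun θ q.1 q.2 := rfl
    rw [hcomp, Measure.map_apply (measurable_Gfun hθ) measurableSet_Iic,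
      Measure.restrict_apply measurableSet_Iic, hμ0,
      Measure.restrict_apply ((measurable_Gfun hθ) measurableSet_Iic)]
    rcases le_or_gt a 0 with ha | ha
    · have hl : ((fun q : ℝ × ℝ => Gfun θ q.1 q.2) ⁻¹' Iic a) ∩ sq = ∅ := by
        apply eq_empty_of_forall_notMem
        rintro q ⟨h1, h2⟩
        have hq1 : 0 < q.1 ∧ q.1 < 1 := h2.1
        have hq2 : 0 < q.2 ∧ q.2 < 1 := h2.2
        have := Gfun_pos hθ hq1.1 hq1.2 hq2.1 hq2.2
        have : (0:ℝ) < a := lt_of_lt_of_le this h1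
        linarith
      have hr : volume (Iic a ∩ Icc (0:ℝ) 1) = 0 := by
        refine measure_mono_null (fun x hx => ?_) (Real.volume_singleton (a := (0:ℝ)))
        exact le_antisymm (hx.1.trans ha) hx.2.1
      rw [hl, measure_empty, hr]
    · rcases lt_or_ge a 1 with ha1 | ha1
      · have hsetEq : ((fun q : ℝ × ℝ => Gfun θ q.1 q.2) ⁻¹' Iic a) ∩ sq =
            {q : ℝ × ℝ | q.1 ≤ 1 ∧ Gfun θ q.1 q.2 ≤ a} ∩ sq := by
          ext q
          constructor
          · rintro ⟨h1, h2⟩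
            have hq1 : 0 < q.1 ∧ q.1 < 1 := h2.1
            exact ⟨⟨hq1.2.le, h1⟩, h2⟩
          · rintro ⟨h1, h2⟩
            exact ⟨h1.2, h2⟩
        rw [hsetEq, ← Measure.restrict_apply (measurableSet_A hθ 1 a),
          key hθ one_pos le_rfl ha ha1.le, Cfun_at_one hθ ha ha1.le]
        have : Iic a ∩ Icc (0:ℝ) 1 = Icc 0 a := by
          ext x
          constructor
          · rintro ⟨h1, h2, h3⟩; exact ⟨h2, h1⟩
          · rintro ⟨h1, h2⟩; exact ⟨h2, h1, h2.trans (le_trans ha1.le le_rfl)⟩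
        rw [this, Real.volume_Icc, sub_zero]
      · have hsetEq : ((fun q : ℝ × ℝ => Gfun θ q.1 q.2) ⁻¹' Iic a) ∩ sq = sq := by
          apply inter_eq_right.2
          intro q hq
          exact le_trans (Gfun_le_one hθ q.1 q.2) ha1
        have hIcc : Iic a ∩ Icc (0:ℝ) 1 = Icc 0 1 := by
          apply inter_eq_right.2
          intro x hx
          exact hx.2.trans ha1
        rw [hsetEq, hsqvol, hIcc, Real.volume_Icc, sub_zero, ENNReal.ofReal_one]
  · -- the CDF values
    intro u hu v hv
    rw [Measure.map_apply hT (measurableSet_Icc.prod measurableSet_Icc), hμ0,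
      Measure.restrict_apply (hT (measurableSet_Icc.prod measurableSet_Icc))]
    have hsetEq : T ⁻¹' (Icc (0:ℝ) u ×ˢ Icc (0:ℝ) v) ∩ sq =
        {q : ℝ × ℝ | q.1 ≤ u ∧ Gfun θ q.1 q.2 ≤ v} ∩ sq := by
      ext q
      constructor
      · rintro ⟨hmem, hq⟩
        exact ⟨⟨hmem.1.2, hmem.2.2⟩, hq⟩
      · rintro ⟨hmem, hq⟩
        have hq1 : 0 < q.1 ∧ q.1 < 1 := hq.1
        have hq2 : 0 < q.2 ∧ q.2 < 1 := hq.2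
        exact ⟨⟨⟨hq1.1.le, hmem.1⟩,
          (Gfun_pos hθ hq1.1 hq1.2 hq2.1 hq2.2).le, hmem.2⟩, hq⟩
    rw [hsetEq, ← Measure.restrict_apply (measurableSet_A hθ u v),
      key hθ hu.1 hu.2 hv.1 hv.2]
    rw [ENNReal.toReal_ofReal (Cfun_nonneg θ v u)]
    unfold Cfun sF
    rw [if_neg (not_le.2 hu.1)]
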